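/- Let R be a commutative ring with elements ŝ_0 = 1, ŝ_1, ŝ_2, ... and e_1, ..., e_n (set e_0 = 1, e_m = 0 for m > n), and define s̃_r := ∑_{i=0}^{r} e_i ŝ_{r−i}. Define Ê_r := det(ŝ_{1+j−i})_{1≤i,j≤r} and Ẽ_r := det(s̃_{1+j−i} − δ_{rj} e_{1+j−i})_{1≤i,j≤r} (conventions: ŝ_m = s̃_m = 0 for m < 0). Then Ê_r = Ẽ_r for all r ≥ 1. -/
import Mathlib


/-- A sequence extended to integer indices, vanishing for negative indices. -/
def seqZ {R : Type*} [CommRing R] (c : ℕ → R) (m : ℤ) : R :=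
  if 0 ≤ m then c m.toNat else 0

lemma seqZ_natCast {R : Type*} [CommRing R] (c : ℕ → R) (m : ℕ) :
    seqZ c (m : ℤ) = c m := by simp [seqZ]

lemma seqZ_neg {R : Type*} [CommRing R] (c : ℕ → R) {m : ℤ} (h : m < 0) :
    seqZ c m = 0 := by simp [seqZ]; omega

lemma row_op_entry {R : Type*} [CommRing R] (sh e st : ℕ → R)
    (hsh0 : sh 0 = 1)
    (hst : ∀ r, st r = ∑ a ∈ Finset.range (r + 1), e a * sh (r - a))
    (r i j : ℕ) (hi : i < r) (hj : j < r) :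
    ∑ k ∈ Finset.range r, seqZ e ((k : ℤ) - i) * seqZ sh (1 + (j : ℤ) - k)
      = seqZ st (1 + (j : ℤ) - i) -
        if j = r - 1 then seqZ e (1 + (j : ℤ) - i) else 0 := by
  by_cases hij : i ≤ j + 1
  · have hd : (1 + (j : ℤ) - i) = ((j + 1 - i : ℕ) : ℤ) := by omega
    set d := j + 1 - i with hdim
    have hIco : ∑ k ∈ Finset.range r, seqZ e ((k : ℤ) - i) * seqZ sh (1 + (j : ℤ) - k)
        = ∑ k ∈ Finset.Ico i r, seqZ e ((k : ℤ) - i) * seqZ sh (1 + (j : ℤ) - k) := by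
      refine (Finset.sum_subset ?_ ?_).symm
      · intro k hk; simp at hk ⊢; omega
      · intro k hk hk'
        simp only [Finset.mem_range] at hk
        simp only [Finset.mem_Ico, not_and, not_le] at hk'
        have : (k : ℤ) - i < 0 := by omega
        rw [seqZ_neg e this, zero_mul]
    have hshift : ∑ k ∈ Finset.Ico i r, seqZ e ((k : ℤ) - i) * seqZ sh (1 + (j : ℤ) - k)
        = ∑ a ∈ Finset.range (r - i), e a * seqZ sh ((d : ℤ) - a) := by
      rw [Finset.sum_Ico_eq_sum_range]
      refine Finset.sum_congr rfl fun a _ => ?_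
      have h1 : ((i + a : ℕ) : ℤ) - i = (a : ℕ) := by push_cast; ring
      have h2 : 1 + (j : ℤ) - (i + a : ℕ) = (d : ℤ) - a := by push_cast; omega
      rw [h1, h2, seqZ_natCast]
    rw [hIco, hshift, hd, seqZ_natCast]
    by_cases hjr : j = r - 1
    · have hri : r - i = d := by omega
      rw [if_pos hjr, seqZ_natCast, hri, hst d, Finset.sum_range_succ]
      have : ∑ a ∈ Finset.range d, e a * seqZ sh ((d : ℤ) - a)
          = ∑ a ∈ Finset.range d, e a * sh (d - a) := by
        refine Finset.sum_congr rfl fun a ha => ?_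
        simp only [Finset.mem_range] at ha
        have : (d : ℤ) - a = ((d - a : ℕ) : ℤ) := by omega
        rw [this, seqZ_natCast]
      rw [this, Nat.sub_self, hsh0, mul_one]
      ring
    · rw [if_neg hjr, sub_zero, hst d]
      have hsub : Finset.range (d + 1) ⊆ Finset.range (r - i) := by
        intro a ha; simp at ha ⊢; omega
      rw [← Finset.sum_subset hsub]
      · refine Finset.sum_congr rfl fun a ha => ?_
        simp only [Finset.mem_range] at ha
        have : (d : ℤ) - a = ((d - a : ℕ) : ℤ) := by omega
        rw [this, seqZ_natCast]
      · intro a ha ha'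
        simp only [Finset.mem_range, not_lt] at ha ha'
        have : (d : ℤ) - a < 0 := by omega
        rw [seqZ_neg sh this, mul_zero]
  · have hneg : 1 + (j : ℤ) - i < 0 := by omega
    rw [seqZ_neg st hneg]
    have : (if j = r - 1 then seqZ e (1 + (j : ℤ) - i) else 0) = 0 := by
      split
      · exact seqZ_neg e hneg
      · rfl
    rw [this, sub_zero, Finset.sum_eq_zero]
    intro k hk
    by_cases hki : k < i
    · have : (k : ℤ) - i < 0 := by omega
      rw [seqZ_neg e this, zero_mul]
    · have : 1 + (j : ℤ) - k < 0 := by omega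
      rw [seqZ_neg sh this, mul_zero]

/-- Row-operation identity: let `ŝ_0 = 1`, `e_0 = 1`, `e_m = 0` for `m > n`, and set
`s̃_r := ∑_{i=0}^{r} e_i ŝ_{r-i}`. Then for every `r ≥ 1` the determinants
`Ê_r = det (ŝ_{1+j-i})` and `Ẽ_r = det (s̃_{1+j-i} - δ_{r j} e_{1+j-i})` coincide. -/
theorem row_operation_det_identity {R : Type*} [CommRing R] (n : ℕ) (sh e : ℕ → R)
    (hsh0 : sh 0 = 1) (he0 : e 0 = 1) (hen : ∀ m, n < m → e m = 0)
    (st : ℕ → R)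
    (hst : ∀ r, st r = ∑ i ∈ Finset.range (r + 1), e i * sh (r - i))
    (r : ℕ) (hr : 1 ≤ r) :
    Matrix.det (Matrix.of fun i j : Fin r =>
        seqZ sh (1 + (j.val : ℤ) - (i.val : ℤ))) =
      Matrix.det (Matrix.of fun i j : Fin r =>
        seqZ st (1 + (j.val : ℤ) - (i.val : ℤ)) -
          if j.val = r - 1 then seqZ e (1 + (j.val : ℤ) - (i.val : ℤ)) else 0) := by
  classical
  set M1 : Matrix (Fin r) (Fin r) R :=
    Matrix.of fun i j : Fin r => seqZ sh (1 + (j.val : ℤ) - (i.val : ℤ)) with hM1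
  set L : Matrix (Fin r) (Fin r) R :=
    Matrix.of fun i k : Fin r => seqZ e ((k.val : ℤ) - (i.val : ℤ)) with hL
  have hLtri : L.BlockTriangular id := by
    intro i k hki
    simp only [id_eq] at hki
    have : (k.val : ℤ) - (i.val : ℤ) < 0 := by
      have := (Fin.lt_iff_val_lt_val.mp hki); omega
    simp only [hL, Matrix.of_apply]
    exact seqZ_neg e this
  have hLdet : L.det = 1 := by
    rw [Matrix.det_of_upperTriangular hLtri]
    refine Finset.prod_eq_one fun i _ => ?_
    simp [hL, seqZ, he0]
  have hmul : (Matrix.of fun i j : Fin r =>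
        seqZ st (1 + (j.val : ℤ) - (i.val : ℤ)) -
          if j.val = r - 1 then seqZ e (1 + (j.val : ℤ) - (i.val : ℤ)) else 0) = L * M1 := by
    ext i j
    rw [Matrix.mul_apply]
    simp only [hL, hM1, Matrix.of_apply]
    rw [Fin.sum_univ_eq_sum_range
      (fun k => seqZ e ((k : ℤ) - (i.val : ℤ)) * seqZ sh (1 + (j.val : ℤ) - (k : ℤ)))]
    exact (row_op_entry sh e st hsh0 hst r i.val j.val i.isLt j.isLt).symm
  rw [hmul, Matrix.det_mul, hLdet, one_mul]
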